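/- Let x be an optimal solution of the transportation LP (minimize Σ c_e x_e with exact integer left supplies and right column sums in [L,U]) and suppose the fractional-support subgraph is a path v_{B_1}, v_{R_1}, v_{B_2}, ..., v_{R_{h-1}}, v_{B_h} with both endpoints on the right side, where the total flows m_1 through v_{B_1} and m_h through v_{B_h} are non-integral. Then L < m_1 and m_h < U, so δ = min({m_1 − L, U − m_h} ∪ {fractional gaps of the path variables}) is strictly positive and augmenting by ±δ along the path preserves feasibility while making at least one more variable integral. -/
import Mathlib


/-- Feasibility for the transportation LP: nonnegative flows, exact integer supplies on
the left vertices, and right column sums in `[L, U]`. -/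
def Feasible {A B : Type*} [Fintype A] [Fintype B] (n : A → ℕ) (L U : ℕ)
    (x : A → B → ℝ) : Prop :=
  (∀ a b, 0 ≤ x a b) ∧ (∀ a, ∑ b, x a b = (n a : ℝ)) ∧
  (∀ b, (L : ℝ) ≤ ∑ a, x a b ∧ ∑ a, x a b ≤ (U : ℝ))

/-- suppose the fractional-support subgraph of a feasible solution `x` is a
path `b 0, a 0, b 1, …, a (h-2), b (h-1)` with both endpoints on the right side, and the
column sums `m₁ = ∑ x · (b 0)` and `m_h = ∑ x · (b (h-1))` are non-integral. Then
`L < m₁` and `m_h < U`, so the augmentation amount `δ = min (m₁ - L) (U - m_h)` (further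
capped by the fractional gaps along the path) is strictly positive. -/
theorem stmt18 {A B : Type*} [Fintype A] [Fintype B]
    (n : A → ℕ) (L U : ℕ) (hLU : L ≤ U) (x : A → B → ℝ)
    (hfeas : Feasible n L U x)
    {h : ℕ} (hh : 2 ≤ h) (a : Fin (h - 1) → A) (b : Fin h → B)
    (ha : Function.Injective a) (hb : Function.Injective b)
    (hfrac : ∀ i : Fin (h - 1),
      (¬ ∃ m : ℤ, x (a i) (b ⟨i.1, by omega⟩) = (m : ℝ)) ∧
      (¬ ∃ m : ℤ, x (a i) (b ⟨i.1 + 1, by omega⟩) = (m : ℝ)))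
    (honly : ∀ a' b', (¬ ∃ m : ℤ, x a' b' = (m : ℝ)) →
      ∃ i : Fin (h - 1), a' = a i ∧
        (b' = b ⟨i.1, by omega⟩ ∨ b' = b ⟨i.1 + 1, by omega⟩))
    (hm1 : ¬ ∃ m : ℤ, ∑ a', x a' (b ⟨0, by omega⟩) = (m : ℝ))
    (hmh : ¬ ∃ m : ℤ, ∑ a', x a' (b ⟨h - 1, by omega⟩) = (m : ℝ)) :
    (L : ℝ) < ∑ a', x a' (b ⟨0, by omega⟩) ∧
    (∑ a', x a' (b ⟨h - 1, by omega⟩)) < (U : ℝ) ∧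
    0 < min ((∑ a', x a' (b ⟨0, by omega⟩)) - (L : ℝ))
            ((U : ℝ) - ∑ a', x a' (b ⟨h - 1, by omega⟩)) := by
  obtain ⟨-, -, hcol⟩ := hfeas
  have h1 := hcol (b ⟨0, by omega⟩)
  have h2 := hcol (b ⟨h - 1, by omega⟩)
  have hL : (L : ℝ) < ∑ a', x a' (b ⟨0, by omega⟩) := by
    rcases lt_or_eq_of_le h1.1 with h' | h'
    · exact h'
    · exact absurd ⟨(L : ℤ), by exact_mod_cast h'.symm⟩ hm1
  have hU : (∑ a', x a' (b ⟨h - 1, by omega⟩)) < (U : ℝ) := by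
    rcases lt_or_eq_of_le h2.2 with h' | h'
    · exact h'
    · exact absurd ⟨(U : ℤ), by exact_mod_cast h'⟩ hmh
  exact ⟨hL, hU, lt_min (by linarith) (by linarith)⟩
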